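/- If m/h = 2, the code C_{D_1} with D_1 = {x ∈ F_q^* : Tr(x^(2^h+1)+x) = 1} has length 2^(m-1), dimension m, and weight enumerator 1 + (2^m - 2) x^(2^(m-2)) + x^(2^(m-1)); i.e., the codeword corresponding to b = 1 has weight 2^(m-1) and all other nonzero codewords have weight 2^(m-2). -/

import Mathlib

open Finset
open scoped Classical

private lemma zmod2_cases : ∀ a : ZMod 2, a = 0 ∨ a = 1 := by decide

private lemma zmod2_ne_zero : ∀ a : ZMod 2, a ≠ 0 ↔ a = 1 := by decide

private lemma fiber_card {A B : Type*} [AddCommGroup A] [AddCommGroup B] [Fintype A] [Fintype B]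
    [DecidableEq B] (f : A →+ B) (hf : Function.Surjective f) (y : B) :
    (univ.filter fun x => f x = y).card * Fintype.card B = Fintype.card A := by
  have key : ∀ z : B, (univ.filter fun x => f x = z).card = (univ.filter fun x => f x = y).card := by
    intro z
    obtain ⟨d, hd⟩ := hf (z - y)
    apply Finset.card_bij' (fun x _ => x - d) (fun x _ => x + d)
    · intro a ha
      simp only [mem_filter, mem_univ, true_and] at ha ⊢
      rw [map_sub, ha, hd]; abel
    · intro a ha
      simp only [mem_filter, mem_univ, true_and] at ha ⊢
      rw [map_add, ha, hd]; abel
    · intro a _; abel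
    · intro a _; abel
  have h2 : Fintype.card A = ∑ z : B, (univ.filter fun x : A => f x = z).card :=
    Finset.card_eq_sum_card_fiberwise (fun x _ => mem_univ _)
  rw [h2, Finset.sum_congr rfl (fun z _ => key z), Finset.sum_const, smul_eq_mul,
    Finset.card_univ, mul_comm]

private lemma surj2 {A : Type*} [AddCommGroup A] [Module (ZMod 2) A]
    (f g : A →ₗ[ZMod 2] ZMod 2) (hf : f ≠ 0) (hg : g ≠ 0) (hfg : f ≠ g) :
    Function.Surjective (fun x => (f x, g x) : A → ZMod 2 × ZMod 2) := by
  obtain ⟨u, hu⟩ := DFunLike.ne_iff.mp hfg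
  obtain ⟨v, hv⟩ := DFunLike.ne_iff.mp hf
  obtain ⟨w, hw⟩ := DFunLike.ne_iff.mp hg
  simp only [LinearMap.zero_apply] at hv hw
  rintro ⟨p, q⟩
  have key : ∀ fu gu fv gv fw gw p q : ZMod 2, fu ≠ gu → fv ≠ 0 → gw ≠ 0 →
      ∃ a b c : ZMod 2, a * fu + b * fv + c * fw = p ∧ a * gu + b * gv + c * gw = q := by
    decide
  obtain ⟨a, b, c, h1, h2⟩ := key (f u) (g u) (f v) (g v) (f w) (g w) p q hu hv hw
  refine ⟨a • u + b • v + c • w, ?_⟩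
  simp only [map_add, map_smul, smul_eq_mul, Prod.mk.injEq]
  exact ⟨h1, h2⟩

theorem stmt18 (m h : ℕ) (hh : 0 < h) (hm : m = 2 * h)
    (F : Type) [Field F] [Fintype F] [Algebra (ZMod 2) F]
    (hcard : Fintype.card F = 2 ^ m)
    (D : Finset F)
    (hD : D = univ.filter fun x : F =>
      x ≠ 0 ∧ Algebra.trace (ZMod 2) F (x ^ (2 ^ h + 1) + x) = 1) :
    (D.card : ℤ) = 2 ^ (m - 1) ∧
    Function.Injective
      (fun b : F => fun x : {x : F // x ∈ D} => Algebra.trace (ZMod 2) F (b * x.1)) ∧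
    ((D.filter fun x : F => Algebra.trace (ZMod 2) F (1 * x) ≠ 0).card : ℤ) =
      2 ^ (m - 1) ∧
    (∀ b : F, b ≠ 0 → b ≠ 1 →
      ((D.filter fun x : F => Algebra.trace (ZMod 2) F (b * x) ≠ 0).card : ℤ) =
        2 ^ (m - 2)) := by
  haveI : CharP F 2 := charP_of_injective_algebraMap (algebraMap (ZMod 2) F).injective 2
  haveI : FiniteDimensional (ZMod 2) F := Module.Finite.of_finite (R := ZMod 2) (M := F)
  set Tr := Algebra.trace (ZMod 2) F with hTrdef
  have hm2 : 2 ≤ m := by omega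
  -- the square of the 2^h power map is the identity
  have hpow : ∀ x : F, (x ^ 2 ^ h) ^ 2 ^ h = x := by
    intro x
    rw [← pow_mul, ← pow_add]
    have : h + h = m := by omega
    rw [this, ← hcard]
    exact FiniteField.pow_card x
  -- the automorphism x ↦ x^(2^h)
  let ψ : F ≃ₐ[ZMod 2] F :=
  { toFun := fun x => x ^ 2 ^ h
    invFun := fun x => x ^ 2 ^ h
    left_inv := hpow
    right_inv := hpow
    map_mul' := fun a b => mul_pow a b _
    map_add' := fun a b => add_pow_char_pow a b 2 h
    commutes' := by
      intro c
      rcases zmod2_cases c with rfl | rfl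
      · simp only [map_zero]
        exact zero_pow (by positivity)
      · simp }
  have hψapp : ∀ x : F, ψ x = x ^ 2 ^ h := fun _ => rfl
  have hψne : ψ ≠ 1 := by
    intro hid
    have hall : ∀ x : F, x ^ 2 ^ h = x := by
      intro x
      have := DFunLike.congr_fun hid x
      simpa [hψapp] using this
    set p : Polynomial F := Polynomial.X ^ 2 ^ h - Polynomial.X with hp
    have h2h : 1 < 2 ^ h := Nat.one_lt_two_pow_iff.mpr (by omega)
    have hdegX : (Polynomial.X : Polynomial F).natDegree < (Polynomial.X ^ 2 ^ h :
        Polynomial F).natDegree := by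
      rw [Polynomial.natDegree_X, Polynomial.natDegree_X_pow]; exact h2h
    have hdeg : p.natDegree = 2 ^ h := by
      rw [hp, Polynomial.natDegree_sub_eq_left_of_natDegree_lt hdegX,
        Polynomial.natDegree_X_pow]
    have hpne : p ≠ 0 := by
      intro h0
      rw [h0] at hdeg
      simp at hdeg
      omega
    have heval : ∀ r : F, p.eval r = 0 := by
      intro r; simp [hp, hall r]
    have : p = 0 := by
      apply Polynomial.eq_zero_of_natDegree_lt_card_of_eval_eq_zero p
        (f := (id : F → F)) Function.injective_id heval
      rw [hdeg, hcard]
      exact Nat.pow_lt_pow_right one_lt_two (by omega)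
    exact hpne this
  have hψsq : ψ * ψ = 1 := by
    apply AlgEquiv.ext
    intro x
    show ψ (ψ x) = x
    rw [hψapp, hψapp]
    exact hpow x
  -- trace vanishes on the subfield fixed by ψ
  haveI : IsGalois (ZMod 2) F := inferInstance
  have htr_sub : ∀ y : F, y ^ 2 ^ h = y → Tr y = 0 := by
    intro y hy
    have h1 : algebraMap (ZMod 2) F (Tr y) = 0 := by
      rw [hTrdef, trace_eq_sum_automorphisms]
      apply Finset.sum_ninvolution (fun σ => σ * ψ)
      · intro σ
        have : (σ * ψ) y = σ (ψ y) := rfl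
        rw [this, hψapp, hy]
        exact CharTwo.add_self_eq_zero _
      · intro σ _ heq
        exact hψne (mul_eq_left.mp heq)
      · intro σ; exact mem_univ _
      · intro σ; rw [mul_assoc, hψsq, mul_one]
    have := (algebraMap (ZMod 2) F).injective
    apply this
    rw [h1, map_zero]
  have htr1 : ∀ x : F, Tr (x ^ (2 ^ h + 1)) = 0 := by
    intro x
    apply htr_sub
    calc (x ^ (2 ^ h + 1)) ^ 2 ^ h = (x ^ 2 ^ h * x) ^ 2 ^ h := by rw [pow_succ]
      _ = (x ^ 2 ^ h) ^ 2 ^ h * x ^ 2 ^ h := mul_pow _ _ _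
      _ = x * x ^ 2 ^ h := by rw [hpow]
      _ = x ^ (2 ^ h + 1) := by rw [mul_comm, ← pow_succ]
  -- membership in D is equivalent to Tr x = 1
  have hmem : ∀ x : F, x ∈ D ↔ Tr x = 1 := by
    intro x
    rw [hD, mem_filter]
    constructor
    · rintro ⟨-, -, htx⟩
      rwa [map_add, htr1, zero_add] at htx
    · intro htx
      refine ⟨mem_univ _, ?_, ?_⟩
      · intro h0
        rw [h0, map_zero] at htx
        exact zero_ne_one htx
      · rw [map_add, htr1, zero_add]; exact htx
  have hD' : D = univ.filter fun x : F => Tr x = 1 := by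
    ext x; rw [hmem, mem_filter]; simp
  -- trace is nonzero
  obtain ⟨u, hu⟩ := DFunLike.ne_iff.mp (Algebra.trace_ne_zero (ZMod 2) F)
  simp only [LinearMap.zero_apply] at hu
  have hu1 : Tr u = 1 := (zmod2_ne_zero _).mp hu
  -- trace is surjective as additive hom
  have trsurj : Function.Surjective (Tr.toAddMonoidHom : F → ZMod 2) := by
    intro p
    rcases zmod2_cases p with rfl | rfl
    · exact ⟨0, map_zero _⟩
    · exact ⟨u, hu1⟩
  have hcard2 : Fintype.card (ZMod 2) = 2 := rfl
  -- Part 1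
  have hc1 : D.card * 2 = 2 ^ m := by
    rw [hD']
    have := fiber_card Tr.toAddMonoidHom trsurj 1
    rwa [hcard2, hcard] at this
  have hDcard : D.card = 2 ^ (m - 1) := by
    have : 2 ^ m = 2 ^ (m - 1) * 2 := by
      rw [← pow_succ]
      congr 1
      omega
    omega
  refine ⟨by exact_mod_cast hDcard, ?_, ?_, ?_⟩
  -- Part 2: injectivity
  · intro b b' heq
    have hker : ∀ z : F, Tr ((b - b') * z) = 0 := by
      have hbz : ∀ z : F, Tr z = 1 → Tr ((b - b') * z) = 0 := by
        intro z hz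
        have hzD : z ∈ D := (hmem z).mpr hz
        have := congrFun heq (⟨z, hzD⟩ : {x : F // x ∈ D})
        simp only at this
        rw [sub_mul, map_sub, this, sub_self]
      intro z
      rcases zmod2_cases (Tr z) with hz | hz
      · have hzu : Tr (z + u) = 1 := by rw [map_add, hz, hu1, zero_add]
        have h1 := hbz (z + u) hzu
        have h2 := hbz u hu1
        rw [mul_add, map_add, h2, add_zero] at h1
        exact h1
      · exact hbz z hz
    have hsep : Algebra.IsSeparable (ZMod 2) F := inferInstance
    have hnd := traceForm_nondegenerate (ZMod 2) F
    have : b - b' = 0 := by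
      apply hnd.1
      intro n
      rw [Algebra.traceForm_apply]
      exact hker n
    exact sub_eq_zero.mp this
  -- Part 3: b = 1
  · have : (D.filter fun x : F => Tr (1 * x) ≠ 0) = D := by
      apply Finset.filter_true_of_mem
      intro x hx
      rw [one_mul, (hmem x).mp hx]
      exact one_ne_zero
    rw [this]
    exact_mod_cast hDcard
  -- Part 4
  · intro b hb0 hb1
    set g : F →ₗ[ZMod 2] F := LinearMap.mulLeft (ZMod 2) b with hgdef
    set G : F →ₗ[ZMod 2] ZMod 2 := Tr.comp g with hGdef
    have hGapp : ∀ x : F, G x = Tr (b * x) := fun x => rfl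
    have hfne : Tr ≠ 0 := Algebra.trace_ne_zero (ZMod 2) F
    have hGne : G ≠ 0 := by
      intro h0
      have := DFunLike.congr_fun h0 (b⁻¹ * u)
      rw [hGapp, LinearMap.zero_apply, ← mul_assoc, mul_inv_cancel₀ hb0, one_mul, hu1] at this
      exact one_ne_zero this
    have hfG : Tr ≠ G := by
      intro hfg
      have := DFunLike.congr_fun hfg ((1 - b)⁻¹ * u)
      rw [hGapp] at this
      have h1b : (1 - b) ≠ 0 := sub_ne_zero.mpr (Ne.symm hb1)
      have : Tr ((1 - b) * ((1 - b)⁻¹ * u)) = 0 := by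
        rw [sub_mul, map_sub, one_mul, this, sub_self]
      rw [← mul_assoc, mul_inv_cancel₀ h1b, one_mul, hu1] at this
      exact one_ne_zero this
    have hsurj : Function.Surjective (fun x => (Tr x, G x) : F → ZMod 2 × ZMod 2) :=
      surj2 Tr G hfne hGne hfG
    set Ψ : F →+ ZMod 2 × ZMod 2 := Tr.toAddMonoidHom.prod G.toAddMonoidHom with hΨdef
    have hΨapp : ∀ x : F, Ψ x = (Tr x, G x) := fun x => rfl
    have hΨsurj : Function.Surjective (Ψ : F → ZMod 2 × ZMod 2) := hsurj
    have hc4 := fiber_card Ψ hΨsurj (1, 1)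
    rw [hcard] at hc4
    have hcard4 : Fintype.card (ZMod 2 × ZMod 2) = 4 := rfl
    rw [hcard4] at hc4
    have hfeq : (D.filter fun x : F => Tr (b * x) ≠ 0) =
        univ.filter fun x : F => Ψ x = (1, 1) := by
      ext x
      simp only [mem_filter, mem_univ, true_and, hmem x, hΨapp, Prod.mk.injEq, hGapp,
        zmod2_ne_zero]
    rw [hfeq] at *
    have : 2 ^ m = 2 ^ (m - 2) * 4 := by
      have : (4 : ℕ) = 2 ^ 2 := rfl
      rw [this, ← pow_add]
      congr 1
      omega
    have hc : (univ.filter fun x : F => Ψ x = (1, 1)).card = 2 ^ (m - 2) := by omega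
    exact_mod_cast hc
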